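/- arXiv:1610.06502 — 2 statements merged into one kernel-verified Lean document; each statement's English description precedes it below -/
import Mathlib

section
/- Let ν be a probability measure on Ω and Λ a nonempty finite subset of Z^d. Define F(ω) = |Λ|·d_K(E_Λ(ω), ν) = sup{Σ_{x∈Λ} G(T_xω) − |Λ|·E_ν[G] : G: Ω → ℝ 1-Lipschitz with respect to the metric d}. Then ‖δ(F)‖₂² ≤ c_d·|Λ|, where c_d = (Σ_{z∈Z^d} 2^{−‖z‖∞})². -/
open MeasureTheory Filter

namespace Paper

/-- Sites of the lattice `ℤ^d`. -/
abbrev Site (d : ℕ) := Fin d → ℤ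

/-- Configuration space `Ω = S^{ℤ^d}`. -/
abbrev Config (S : Type) (d : ℕ) := Site d → S

variable {S : Type} {d : ℕ}

/-- Shift action: `(T_x ω)_y = ω_{y-x}`. -/
def shift (x : Site d) (ω : Config S d) : Config S d := fun y => ω (y - x)

/-- Oscillation `δ_x(F)` of `F` at site `x`. -/
noncomputable def osc (F : Config S d → ℝ) (x : Site d) : ℝ :=
  sSup {r | ∃ ω ω' : Config S d, (∀ y, y ≠ x → ω y = ω' y) ∧ r = |F ω - F ω'|}

/-- `‖δ(F)‖₁`. -/
noncomputable def oscNorm1 (F : Config S d → ℝ) : ℝ := ∑' x : Site d, osc F x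

/-- `‖δ(F)‖₂²`. -/
noncomputable def oscNorm2sq (F : Config S d → ℝ) : ℝ := ∑' x : Site d, osc F x ^ 2

/-- `‖δ(F)‖₂`. -/
noncomputable def oscNorm2 (F : Config S d → ℝ) : ℝ := Real.sqrt (oscNorm2sq F)

/-- `F ∈ Δ₁(Ω)`: continuous with summable oscillations. -/
def MemDelta1 [TopologicalSpace S] (F : Config S d → ℝ) : Prop :=
  Continuous F ∧ Summable (fun x : Site d => osc F x)

/-- `F ∈ Δ₂(Ω)`: continuous with square-summable oscillations. -/
def MemDelta2 [TopologicalSpace S] (F : Config S d → ℝ) : Prop :=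
  Continuous F ∧ Summable (fun x : Site d => osc F x ^ 2)

/-- Gaussian concentration bound `GCB(D)`. -/
def GCB [TopologicalSpace S] [MeasurableSpace S] (ν : Measure (Config S d)) (D : ℝ) : Prop :=
  ∀ F : Config S d → ℝ, MemDelta2 F →
    ∫ ω, Real.exp (F ω - ∫ ω', F ω' ∂ν) ∂ν ≤ Real.exp (D * oscNorm2sq F)

/-- Moment concentration bound `MCB(2p, C)` of order `2p` with constant `C`. -/
def MCB [TopologicalSpace S] [MeasurableSpace S] (ν : Measure (Config S d)) (p : ℕ) (C : ℝ) :
    Prop :=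
  ∀ F : Config S d → ℝ, MemDelta2 F →
    ∫ ω, (F ω - ∫ ω', F ω' ∂ν) ^ (2 * p) ∂ν ≤ C * (oscNorm2sq F) ^ p

/-- A local function: depends only on finitely many coordinates. -/
def IsLocal (F : Config S d → ℝ) : Prop :=
  ∃ Λ : Finset (Site d), ∀ ω ω' : Config S d, (∀ x ∈ Λ, ω x = ω' x) → F ω = F ω'

/-- The cube `C_n = {x : ‖x‖_∞ ≤ n}`. -/
noncomputable def cube (d n : ℕ) : Finset (Site d) :=
  Fintype.piFinset (fun _ : Fin d => Finset.Icc (-(n : ℤ)) (n : ℤ))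

/-- Sup norm `‖f‖_∞`. -/
noncomputable def supNorm (f : Config S d → ℝ) : ℝ := sSup {r | ∃ ω, r = |f ω|}

/-- The metric `d(ω,ω') = 2^{-min{‖x‖_∞ : ω_x ≠ ω'_x}}` on configuration space. -/
noncomputable def confDist (ω ω' : Config S d) : ℝ :=
  haveI := Classical.propDecidable (ω = ω')
  if ω = ω' then 0
  else (2 : ℝ) ^ (-sInf {r : ℝ | ∃ x : Site d, ω x ≠ ω' x ∧ r = ‖x‖})

/-- `G` is 1-Lipschitz with respect to `confDist`. -/
def Lip1 (G : Config S d → ℝ) : Prop :=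
  ∀ ω ω' : Config S d, |G ω - G ω'| ≤ confDist ω ω'

/-- Kantorovich distance `d_K(E_Λ(ω), ν)` between the empirical measure and `ν`. -/
noncomputable def dKEmp [MeasurableSpace S] (ν : Measure (Config S d)) (Λ : Finset (Site d))
    (ω : Config S d) : ℝ :=
  sSup {r | ∃ G : Config S d → ℝ, Lip1 G ∧
    r = (∑ x ∈ Λ, G (shift x ω)) / (Λ.card : ℝ) - ∫ ω', G ω' ∂ν}

-- ## Summability of z ↦ 2^{-‖z‖}

theorem sm_wrapper {ι' : Type} {g : ℤ → ℝ} {h : ι' → ℝ} (hg : Summable g) (ih : Summable h)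
    (hg0 : ∀ k, 0 ≤ g k) (hh0 : ∀ z, 0 ≤ h z) :
    Summable (fun p : ℤ × ι' => g p.1 * h p.2) :=
  hg.mul_of_nonneg ih (fun k => hg0 k) (fun z => hh0 z)

lemma summable_geom_int {r : ℝ} (h0 : 0 ≤ r) (h1 : r < 1) :
    Summable (fun k : ℤ => r ^ k.natAbs) := by
  apply Summable.of_nat_of_neg
  · simpa using summable_geometric_of_lt_one h0 h1
  · simpa using summable_geometric_of_lt_one h0 h1

lemma summable_pi_prod {n : ℕ} {g : ℤ → ℝ} (hg : Summable g) (hg0 : ∀ k, 0 ≤ g k) :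
    Summable (fun z : Fin n → ℤ => ∏ i, g (z i)) := by
  induction n with
  | zero => exact Summable.of_finite
  | succ n ih =>
      have hh0 : ∀ z : Fin n → ℤ, 0 ≤ ∏ i, g (z i) :=
        fun z => Finset.prod_nonneg fun i _ => hg0 _
      have h : Summable (fun p : ℤ × (Fin n → ℤ) => g p.1 * ∏ i, g (p.2 i)) :=
        sm_wrapper (h := fun z : Fin n → ℤ => ∏ i, g (z i)) hg ih hg0 hh0
      have h2 := (Fin.consEquiv fun _ => ℤ).symm.summable_iff.mpr h
      have he : ((fun p : ℤ × (Fin n → ℤ) => g p.1 * ∏ i, g (p.2 i)) ∘ (Fin.consEquiv fun _ => ℤ).symm)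
          = fun z : Fin (n+1) → ℤ => ∏ i, g (z i) := by
        funext z
        simp [Fin.consEquiv, Fin.prod_univ_succ, Fin.tail]
      rwa [he] at h2

lemma rpow_finset_sum {x : ℝ} (hx : 0 < x) {ι : Type*} (s : Finset ι) (f : ι → ℝ) :
    x ^ (∑ i ∈ s, f i) = ∏ i ∈ s, x ^ f i := by
  induction s using Finset.cons_induction with
  | empty => simp
  | cons a s ha ih => rw [Finset.sum_cons, Finset.prod_cons, Real.rpow_add hx, ih]

lemma summable_base (d : ℕ) : Summable (fun z : Site d => (2:ℝ) ^ (-‖z‖)) := by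
  set r : ℝ := (2:ℝ) ^ (-(1/(d+1) : ℝ)) with hr
  have hr0 : 0 ≤ r := Real.rpow_nonneg (by norm_num) _
  have hr1 : r < 1 := by
    rw [hr]
    apply Real.rpow_lt_one_of_one_lt_of_neg (by norm_num)
    rw [neg_lt_zero]; positivity
  have hg : Summable (fun z : Fin d → ℤ => ∏ i, r ^ (z i).natAbs) :=
    summable_pi_prod (g := fun k => r ^ k.natAbs) (summable_geom_int hr0 hr1)
      (fun k => pow_nonneg hr0 _)
  apply Summable.of_nonneg_of_le (fun z => Real.rpow_nonneg (by norm_num) _) _ hg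
  intro z
  have hprod : ∏ i, r ^ (z i).natAbs
      = (2:ℝ) ^ (∑ i, (-(1/(d+1) : ℝ) * ((z i).natAbs : ℝ))) := by
    rw [rpow_finset_sum (by norm_num)]
    refine Finset.prod_congr rfl fun i _ => ?_
    rw [hr, ← Real.rpow_natCast ((2:ℝ) ^ (-(1/(d+1):ℝ))) _, ← Real.rpow_mul (by norm_num)]
  rw [hprod]
  apply (Real.rpow_le_rpow_left_iff (by norm_num : (1:ℝ) < 2)).mpr
  rw [← Finset.mul_sum, neg_mul, neg_le_neg_iff, one_div, inv_mul_le_iff₀ (by positivity)]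
  have hnorm : ∀ i, ((z i).natAbs : ℝ) ≤ ‖z‖ := by
    intro i
    calc ((z i).natAbs : ℝ) = ‖z i‖ := by
          simp [Int.norm_eq_abs, Nat.cast_natAbs]
      _ ≤ ‖z‖ := norm_le_pi_norm z i
  calc ∑ i, ((z i).natAbs : ℝ) ≤ ∑ _i : Fin d, ‖z‖ := Finset.sum_le_sum fun i _ => hnorm i
    _ = d * ‖z‖ := by simp [Finset.sum_const, mul_comm]
    _ ≤ (d+1) * ‖z‖ := by
        have : (0:ℝ) ≤ ‖z‖ := norm_nonneg z
        nlinarith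

-- ## confDist and Lip1 lemmas

lemma confDist_nonneg (ω ω' : Config S d) : 0 ≤ confDist ω ω' := by
  unfold confDist
  split_ifs with he
  · exact le_rfl
  · exact Real.rpow_nonneg (by norm_num) _

lemma lip1_zero : Lip1 (fun _ : Config S d => (0:ℝ)) := by
  intro ω ω'
  simpa using confDist_nonneg ω ω'

lemma confDist_shift_le {y : Site d} {ω ω' : Config S d} (h : ∀ z, z ≠ y → ω z = ω' z)
    (x : Site d) : confDist (shift x ω) (shift x ω') ≤ (2:ℝ) ^ (-‖y + x‖) := by
  unfold confDist
  split_ifs with he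
  · exact Real.rpow_nonneg (by norm_num) _
  · have hset : {r : ℝ | ∃ z : Site d, shift x ω z ≠ shift x ω' z ∧ r = ‖z‖}
        = {‖y + x‖} := by
      ext r
      constructor
      · rintro ⟨z, hz, rfl⟩
        have hzy : z - x = y := by
          by_contra hne
          exact hz (h _ hne)
        have hz' : z = y + x := sub_eq_iff_eq_add.mp hzy
        rw [hz']
        rfl
      · intro hr
        rw [Set.mem_singleton_iff] at hr
        have : ¬ (∀ z, shift x ω z = shift x ω' z) := fun hall => he (funext hall)
        push_neg at this
        obtain ⟨z, hz⟩ := this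
        have hzy : z - x = y := by
          by_contra hne
          exact hz (h _ hne)
        have hz' : z = y + x := sub_eq_iff_eq_add.mp hzy
        exact ⟨z, hz, by rw [hr, hz']⟩
    rw [hset, csInf_singleton]

-- ## the key oscillation bound for the Kantorovich-type sup

lemma kant_diff_le [MeasurableSpace S] (ν : Measure (Config S d)) (Λ : Finset (Site d))
    {y : Site d} {ω ω' : Config S d} (h : ∀ z, z ≠ y → ω z = ω' z) :
    |sSup {r | ∃ G : Config S d → ℝ, Lip1 G ∧
        r = (∑ x ∈ Λ, G (shift x ω)) - (Λ.card : ℝ) * ∫ ω'', G ω'' ∂ν} -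
     sSup {r | ∃ G : Config S d → ℝ, Lip1 G ∧
        r = (∑ x ∈ Λ, G (shift x ω')) - (Λ.card : ℝ) * ∫ ω'', G ω'' ∂ν}|
      ≤ ∑ x ∈ Λ, (2:ℝ) ^ (-‖y + x‖) := by
  set b : ℝ := ∑ x ∈ Λ, (2:ℝ) ^ (-‖y + x‖) with hb
  have hb0 : 0 ≤ b := Finset.sum_nonneg fun x _ => Real.rpow_nonneg (by norm_num) _
  set A : Config S d → Set ℝ := fun σ => {r | ∃ G : Config S d → ℝ, Lip1 G ∧
      r = (∑ x ∈ Λ, G (shift x σ)) - (Λ.card : ℝ) * ∫ ω'', G ω'' ∂ν} with hA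
  have hmem0 : ∀ σ, (0:ℝ) ∈ A σ := by
    intro σ
    exact ⟨fun _ => 0, lip1_zero, by simp⟩
  have hkey : ∀ σ σ' : Config S d, (∀ z, z ≠ y → σ z = σ' z) →
      ∀ G : Config S d → ℝ, Lip1 G →
      (∑ x ∈ Λ, G (shift x σ)) ≤ (∑ x ∈ Λ, G (shift x σ')) + b := by
    intro σ σ' hσ G hG
    have : (∑ x ∈ Λ, G (shift x σ)) - (∑ x ∈ Λ, G (shift x σ'))
        = ∑ x ∈ Λ, (G (shift x σ) - G (shift x σ')) := by rw [Finset.sum_sub_distrib]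
    have hle : ∑ x ∈ Λ, (G (shift x σ) - G (shift x σ')) ≤ b := by
      apply Finset.sum_le_sum
      intro x _
      exact le_trans (le_abs_self _) (le_trans (hG _ _) (confDist_shift_le hσ x))
    linarith [this, hle, this ▸ hle]
  have hBdd : ∀ σ σ' : Config S d, (∀ z, z ≠ y → σ z = σ' z) →
      BddAbove (A σ') → BddAbove (A σ) := by
    intro σ σ' hσ ⟨M, hM⟩
    refine ⟨M + b, ?_⟩
    rintro r ⟨G, hG, rfl⟩
    have h1 : (∑ x ∈ Λ, G (shift x σ')) - (Λ.card : ℝ) * ∫ ω'', G ω'' ∂ν ≤ M :=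
      hM ⟨G, hG, rfl⟩
    have h2 := hkey σ σ' hσ G hG
    linarith
  have hSup : ∀ σ σ' : Config S d, (∀ z, z ≠ y → σ z = σ' z) →
      BddAbove (A σ') → sSup (A σ) ≤ sSup (A σ') + b := by
    intro σ σ' hσ hB
    apply csSup_le ⟨0, hmem0 σ⟩
    rintro r ⟨G, hG, rfl⟩
    have h1 : (∑ x ∈ Λ, G (shift x σ')) - (Λ.card : ℝ) * ∫ ω'', G ω'' ∂ν ≤ sSup (A σ') :=
      le_csSup hB ⟨G, hG, rfl⟩
    have h2 := hkey σ σ' hσ G hG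
    linarith
  have h' : ∀ z, z ≠ y → ω' z = ω z := fun z hz => (h z hz).symm
  by_cases hB : BddAbove (A ω')
  · have hB' : BddAbove (A ω) := hBdd _ _ h hB
    rw [abs_sub_le_iff]
    constructor
    · linarith [hSup ω ω' h hB]
    · linarith [hSup ω' ω h' hB']
  · have hB' : ¬ BddAbove (A ω) := fun hc => hB (hBdd _ _ h' hc)
    rw [show sSup (A ω) = 0 by rw [csSup_of_not_bddAbove hB']; exact Real.sSup_empty,
        show sSup (A ω') = 0 by rw [csSup_of_not_bddAbove hB]; exact Real.sSup_empty]
    simpa using hb0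

-- ## final assembly

lemma oscNorm2sq_le_of_bound (F : Config S d → ℝ) (Λ : Finset (Site d))
    (hF : ∀ (y : Site d) (ω ω' : Config S d), (∀ z, z ≠ y → ω z = ω' z) →
      |F ω - F ω'| ≤ ∑ x ∈ Λ, (2:ℝ) ^ (-‖y + x‖)) :
    oscNorm2sq F ≤ (∑' z : Site d, (2:ℝ) ^ (-‖z‖)) ^ 2 * (Λ.card : ℝ) := by
  set a : Site d → ℝ := fun z => (2:ℝ) ^ (-‖z‖) with ha
  set c : ℝ := ∑' z : Site d, a z with hc
  set b : Site d → ℝ := fun y => ∑ x ∈ Λ, a (y + x) with hbdef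
  have ha0 : ∀ z, 0 ≤ a z := fun z => Real.rpow_nonneg (by norm_num) _
  have hasum : Summable a := summable_base d
  have hc0 : 0 ≤ c := tsum_nonneg ha0
  have hb0 : ∀ y, 0 ≤ b y := fun y => Finset.sum_nonneg fun x _ => ha0 _
  have hbx : ∀ x : Site d, Summable (fun y : Site d => a (y + x)) := by
    intro x
    have := (Equiv.addRight x).summable_iff.mpr hasum
    simpa [Function.comp_def] using this
  have hbsum : Summable b := summable_sum fun x _ => hbx x
  have hble : ∀ y, b y ≤ c := by
    intro y
    have hsum' : Summable (fun x : Site d => a (y + x)) := by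
      have := (Equiv.addLeft y).summable_iff.mpr hasum
      simpa [Function.comp_def] using this
    have h1 : ∑ x ∈ Λ, a (y + x) ≤ ∑' x : Site d, a (y + x) :=
      Summable.sum_le_tsum Λ (fun x _ => ha0 _) hsum'
    have h2 : ∑' x : Site d, a (y + x) = c := by
      have := (Equiv.addLeft y).tsum_eq a
      simpa [Function.comp] using this
    rw [hbdef]
    calc ∑ x ∈ Λ, a (y + x) ≤ ∑' x : Site d, a (y + x) := h1
      _ = c := h2
  have hosc : ∀ y, 0 ≤ osc F y ∧ osc F y ≤ b y := by
    intro y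
    set O : Set ℝ := {r | ∃ ω ω' : Config S d, (∀ z, z ≠ y → ω z = ω' z) ∧ r = |F ω - F ω'|}
      with hO
    have hOE : osc F y = sSup O := rfl
    have hOb : ∀ r ∈ O, r ≤ b y := by
      rintro r ⟨ω, ω', hd, rfl⟩
      exact hF y ω ω' hd
    rcases isEmpty_or_nonempty (Config S d) with hE | hNE
    · have hOe : O = ∅ := by
        ext r
        simp only [Set.mem_empty_iff_false, iff_false]
        rintro ⟨ω, -⟩
        exact isEmptyElim ω
      rw [hOE, hOe, Real.sSup_empty]
      exact ⟨le_rfl, hb0 y⟩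
    · obtain ⟨ω⟩ := hNE
      have h0O : (0:ℝ) ∈ O := ⟨ω, ω, fun z _ => rfl, by simp⟩
      have hBdd : BddAbove O := ⟨b y, hOb⟩
      rw [hOE]
      exact ⟨le_csSup hBdd h0O, csSup_le ⟨0, h0O⟩ hOb⟩
  have hsq : ∀ y, osc F y ^ 2 ≤ c * b y := by
    intro y
    obtain ⟨h1, h2⟩ := hosc y
    have h3 := hble y
    have h4 := hb0 y
    nlinarith
  have hcbsum : Summable (fun y => c * b y) := hbsum.mul_left c
  have hoscsum : Summable (fun y => osc F y ^ 2) :=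
    Summable.of_nonneg_of_le (fun y => sq_nonneg _) hsq hcbsum
  have h1 : (∑' y, osc F y ^ 2) ≤ ∑' y, c * b y := Summable.tsum_le_tsum hsq hoscsum hcbsum
  have h2 : ∑' y, c * b y = c * ∑' y, b y := tsum_mul_left
  have h3 : ∑' y, b y = (Λ.card : ℝ) * c := by
    rw [hbdef]
    rw [Summable.tsum_finsetSum (fun x _ => hbx x)]
    have hco : ∀ x ∈ Λ, ∑' y : Site d, a (y + x) = c := by
      intro x _
      have := (Equiv.addRight x).tsum_eq a
      simpa [Function.comp] using this
    rw [Finset.sum_congr rfl hco, Finset.sum_const, nsmul_eq_mul]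
  calc oscNorm2sq F = ∑' y, osc F y ^ 2 := rfl
    _ ≤ ∑' y, c * b y := h1
    _ = c * ((Λ.card : ℝ) * c) := by rw [h2, h3]
    _ = c ^ 2 * (Λ.card : ℝ) := by ring


/-- oscillation bound for the (scaled) Kantorovich distance between the
empirical measure and `ν`. -/
theorem oscNorm2sq_kantorovich_sup_le {S : Type} {d : ℕ} [Fintype S] [TopologicalSpace S]
    [DiscreteTopology S] [MeasurableSpace S] [BorelSpace S]
    (ν : Measure (Config S d)) [IsProbabilityMeasure ν]
    (Λ : Finset (Site d)) (hΛ : Λ.Nonempty) :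
    oscNorm2sq (fun ω => sSup {r | ∃ G : Config S d → ℝ, Lip1 G ∧
        r = (∑ x ∈ Λ, G (shift x ω)) - (Λ.card : ℝ) * ∫ ω', G ω' ∂ν}) ≤
      (∑' z : Site d, (2 : ℝ) ^ (-‖z‖)) ^ 2 * (Λ.card : ℝ) := by
  apply oscNorm2sq_le_of_bound
  intro y ω ω' hd
  exact kant_diff_le ν Λ hd

end Paper
end

section
/- Let Λ be a nonempty finite subset of Z^d and let ν be a probability measure on Ω satisfying the Gaussian concentration bound GCB(D) for some D > 0. Let B_Λ ⊂ S^Λ be a set of patterns with ν{ω : ω_Λ ∈ B_Λ} = 1/2, and for ε > 0 let B_{Λ,ε} = {σ ∈ S^Λ : d̄_Λ(σ, B_Λ) ≤ ε|Λ|}, where d̄_Λ(σ,τ) = Σ_{x∈Λ} 1{σ_x ≠ τ_x} is the Hamming distance and d̄_Λ(σ, B_Λ) = min over τ ∈ B_Λ of d̄_Λ(σ,τ). Then, whenever ε > 2√(D·ln 2)/√|Λ|: ν{ω : ω_Λ ∈ B_{Λ,ε}} ≥ 1 − exp(−(|Λ|/(4D))·(ε − 2√(D·ln 2)/√|Λ|)²).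 -/
open MeasureTheory Filter

namespace Paper

variable {S : Type} {d : ℕ}

/-- Restriction `ω_Λ` of a configuration to `Λ`. -/
def restrictTo (Λ : Finset (Site d)) (ω : Config S d) : {x // x ∈ Λ} → S := fun x => ω x.1

/-- Hamming distance from a pattern `σ` to a set `B` of patterns. -/
noncomputable def hamDistToSet [DecidableEq S] {Λ : Finset (Site d)}
    (σ : {x // x ∈ Λ} → S) (B : Set ({x // x ∈ Λ} → S)) : ℕ :=
  sInf {n : ℕ | ∃ τ ∈ B, hammingDist σ τ = n}


section Aux
set_option linter.unusedSectionVars false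

variable [Fintype S] [DecidableEq S] {Λ : Finset (Site d)}

lemma osc_le {F : Config S d → ℝ} {x : Site d} {b : ℝ} (hb : 0 ≤ b)
    (h : ∀ ω ω' : Config S d, (∀ y, y ≠ x → ω y = ω' y) → |F ω - F ω'| ≤ b) :
    osc F x ≤ b :=
  Real.sSup_le (by rintro r ⟨ω, ω', hag, rfl⟩; exact h ω ω' hag) hb

lemma osc_nonneg [Nonempty (Config S d)] {F : Config S d → ℝ} {x : Site d} {b : ℝ}
    (h : ∀ ω ω' : Config S d, (∀ y, y ≠ x → ω y = ω' y) → |F ω - F ω'| ≤ b) :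
    0 ≤ osc F x := by
  obtain ⟨ω⟩ := ‹Nonempty (Config S d)›
  refine le_csSup ⟨b, ?_⟩ ⟨ω, ω, fun _ _ => rfl, by simp⟩
  rintro r ⟨ω1, ω2, hag, rfl⟩; exact h ω1 ω2 hag

lemma hamDistToSet_le (σ : {x // x ∈ Λ} → S) {B : Set ({x // x ∈ Λ} → S)}
    {τ : {x // x ∈ Λ} → S} (hτ : τ ∈ B) : hamDistToSet σ B ≤ hammingDist σ τ :=
  Nat.sInf_le ⟨τ, hτ, rfl⟩

lemma hamDistToSet_eq_zero {B : Set ({x // x ∈ Λ} → S)} {σ : {x // x ∈ Λ} → S} (hσ : σ ∈ B) :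
    hamDistToSet σ B = 0 :=
  Nat.le_zero.mp ((hamDistToSet_le σ hσ).trans (by simp))

lemma hamDistToSet_exists_min {B : Set ({x // x ∈ Λ} → S)} (hB : B.Nonempty)
    (σ : {x // x ∈ Λ} → S) : ∃ τ ∈ B, hammingDist σ τ = hamDistToSet σ B := by
  obtain ⟨τ0, hτ0⟩ := hB
  exact Nat.sInf_mem (⟨hammingDist σ τ0, τ0, hτ0, rfl⟩ :
    Set.Nonempty {n : ℕ | ∃ τ ∈ B, hammingDist σ τ = n})

lemma hamDistToSet_le_add {B : Set ({x // x ∈ Λ} → S)} (hB : B.Nonempty)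
    (σ σ' : {x // x ∈ Λ} → S) :
    hamDistToSet σ B ≤ hamDistToSet σ' B + hammingDist σ σ' := by
  obtain ⟨τ, hτ, hd⟩ := hamDistToSet_exists_min hB σ'
  calc hamDistToSet σ B ≤ hammingDist σ τ := hamDistToSet_le σ hτ
    _ ≤ hammingDist σ σ' + hammingDist σ' τ := hammingDist_triangle σ σ' τ
    _ = hamDistToSet σ' B + hammingDist σ σ' := by rw [hd]; ring

lemma hamDistToSet_lipschitz {B : Set ({x // x ∈ Λ} → S)} (hB : B.Nonempty)
    (σ σ' : {x // x ∈ Λ} → S) :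
    |(hamDistToSet σ B : ℝ) - (hamDistToSet σ' B : ℝ)| ≤ (hammingDist σ σ' : ℝ) := by
  rw [abs_sub_le_iff]
  constructor
  · have h := hamDistToSet_le_add hB σ σ'
    have : (hamDistToSet σ B : ℝ) ≤ (hamDistToSet σ' B : ℝ) + (hammingDist σ σ' : ℝ) := by
      exact_mod_cast h
    linarith
  · have h := hamDistToSet_le_add hB σ' σ
    rw [hammingDist_comm] at h
    have : (hamDistToSet σ' B : ℝ) ≤ (hamDistToSet σ B : ℝ) + (hammingDist σ σ' : ℝ) := by
      exact_mod_cast h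
    linarith

end Aux

set_option maxHeartbeats 1000000 in
/-- fattening patterns under the Gaussian concentration bound. -/
theorem fattening_gcb {S : Type} {d : ℕ} [Fintype S] [DecidableEq S] [TopologicalSpace S]
    [DiscreteTopology S] [MeasurableSpace S] [BorelSpace S]
    (Λ : Finset (Site d)) (hΛ : Λ.Nonempty)
    (ν : Measure (Config S d)) [IsProbabilityMeasure ν]
    (D : ℝ) (hD : 0 < D) (hGCB : GCB ν D)
    (B : Set ({x // x ∈ Λ} → S))
    (hB : ν {ω | restrictTo Λ ω ∈ B} = 1 / 2)
    (ε : ℝ) (hε : 2 * Real.sqrt (D * Real.log 2) / Real.sqrt (Λ.card : ℝ) < ε) :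
    1 - ENNReal.ofReal (Real.exp (-((Λ.card : ℝ) / (4 * D)) *
        (ε - 2 * Real.sqrt (D * Real.log 2) / Real.sqrt (Λ.card : ℝ)) ^ 2)) ≤
      ν {ω | (hamDistToSet (restrictTo Λ ω) B : ℝ) ≤ ε * (Λ.card : ℝ)} := by
  classical
  -- basic setup
  have hMSC : MeasurableSingletonClass S := ⟨fun a => (isOpen_discrete {a}).measurableSet⟩
  have hne : Nonempty (Config S d) := by
    by_contra h
    rw [not_nonempty_iff] at h
    have h1 : ν Set.univ = 1 := measure_univ
    rw [Set.univ_eq_empty_iff.mpr h] at h1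
    simp at h1
  set N : ℕ := Λ.card with hNdef
  have hN : 0 < N := Finset.card_pos.mpr hΛ
  have hNR : (0:ℝ) < N := by exact_mod_cast hN
  have hBne : B.Nonempty := by
    rcases Set.eq_empty_or_nonempty B with h | h
    · exfalso
      rw [h] at hB
      simp only [Set.mem_empty_iff_false, Set.setOf_false, measure_empty] at hB
      exact (ENNReal.div_pos one_ne_zero ENNReal.ofNat_ne_top).ne' hB.symm
    · exact h
  obtain ⟨τ0, hτ0⟩ := hBne
  set F : Config S d → ℝ := fun ω => (hamDistToSet (restrictTo Λ ω) B : ℝ) with hFdef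
  have hF0 : ∀ ω, 0 ≤ F ω := fun ω => Nat.cast_nonneg _
  have hFN : ∀ ω, F ω ≤ N := by
    intro ω
    have h1 : hamDistToSet (restrictTo Λ ω) B ≤ hammingDist (restrictTo Λ ω) τ0 :=
      hamDistToSet_le _ hτ0
    have h2 : hammingDist (restrictTo Λ ω) τ0 ≤ Fintype.card {x // x ∈ Λ} :=
      hammingDist_le_card_fintype
    rw [Fintype.card_coe] at h2
    have h3 := h1.trans h2
    simp only [hFdef, hNdef]
    exact_mod_cast h3
  -- Lipschitz property
  have hFlip : ∀ (x : Site d) (ω ω' : Config S d), (∀ y, y ≠ x → ω y = ω' y) →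
      |F ω - F ω'| ≤ (if x ∈ Λ then (1:ℝ) else 0) := by
    intro x ω ω' hag
    by_cases hx : x ∈ Λ
    · rw [if_pos hx]
      have h1 : |F ω - F ω'| ≤ (hammingDist (restrictTo Λ ω) (restrictTo Λ ω') : ℝ) :=
        hamDistToSet_lipschitz ⟨τ0, hτ0⟩ _ _
      have h2 : hammingDist (restrictTo Λ ω) (restrictTo Λ ω') ≤ 1 := by
        have hsub : Finset.univ.filter
            (fun i : {x // x ∈ Λ} => restrictTo Λ ω i ≠ restrictTo Λ ω' i) ⊆ {⟨x, hx⟩} := by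
          intro i hi
          simp only [Finset.mem_filter, Finset.mem_univ, true_and] at hi
          simp only [Finset.mem_singleton]
          by_contra hne'
          exact hi (hag i.1 (fun he => hne' (Subtype.ext he)))
        calc hammingDist (restrictTo Λ ω) (restrictTo Λ ω')
            = (Finset.univ.filter
              (fun i : {x // x ∈ Λ} => restrictTo Λ ω i ≠ restrictTo Λ ω' i)).card := rfl
          _ ≤ ({⟨x, hx⟩} : Finset {x // x ∈ Λ}).card := Finset.card_le_card hsub
          _ = 1 := Finset.card_singleton _
      calc |F ω - F ω'| ≤ (hammingDist (restrictTo Λ ω) (restrictTo Λ ω') : ℝ) := h1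
        _ ≤ 1 := by exact_mod_cast h2
    · rw [if_neg hx]
      have : restrictTo Λ ω = restrictTo Λ ω' := by
        funext i
        exact hag i.1 (fun he => hx (he ▸ i.2))
      simp [hFdef, this]
  -- measurability and continuity
  have hrmeas : Measurable (restrictTo Λ : Config S d → _) :=
    measurable_pi_lambda _ fun x => measurable_pi_apply x.1
  have hrcont : Continuous (restrictTo Λ : Config S d → _) :=
    continuous_pi fun x => continuous_apply x.1
  have hFmeas : Measurable F :=
    (measurable_of_countable (fun σ : {x // x ∈ Λ} → S => (hamDistToSet σ B : ℝ))).comp hrmeas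
  have hFcont : Continuous F :=
    (continuous_of_discreteTopology
      (f := fun σ : {x // x ∈ Λ} → S => (hamDistToSet σ B : ℝ))).comp hrcont
  -- oscillation bounds for scalar multiples of F
  have hosclip : ∀ (c : ℝ) (x : Site d) (ω ω' : Config S d), (∀ y, y ≠ x → ω y = ω' y) →
      |c * F ω - c * F ω'| ≤ |c| * (if x ∈ Λ then (1:ℝ) else 0) := by
    intro c x ω ω' hag
    rw [← mul_sub, abs_mul]
    exact mul_le_mul_of_nonneg_left (hFlip x ω ω' hag) (abs_nonneg c)
  have hosc0 : ∀ (c : ℝ) (x : Site d), x ∉ Λ → osc (fun ω => c * F ω) x = 0 := by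
    intro c x hx
    refine le_antisymm ?_ (osc_nonneg (hosclip c x))
    have := osc_le (F := fun ω => c * F ω) (x := x) (b := |c| * (if x ∈ Λ then (1:ℝ) else 0))
      (by positivity) (hosclip c x)
    simpa [hx] using this
  have hoscb : ∀ (c : ℝ) (x : Site d), osc (fun ω => c * F ω) x ≤ |c| := by
    intro c x
    refine (osc_le (by positivity) (hosclip c x)).trans ?_
    by_cases hx : x ∈ Λ <;> simp [hx, abs_nonneg]
  have hoscnn : ∀ (c : ℝ) (x : Site d), 0 ≤ osc (fun ω => c * F ω) x :=
    fun c x => osc_nonneg (hosclip c x)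
  have hMem : ∀ c : ℝ, MemDelta2 (fun ω => c * F ω) := by
    intro c
    refine ⟨continuous_const.mul hFcont, summable_of_ne_finset_zero (s := Λ) ?_⟩
    intro x hx
    rw [hosc0 c x hx]
    ring
  have hoscsum : ∀ c : ℝ, oscNorm2sq (fun ω => c * F ω) ≤ c^2 * N := by
    intro c
    rw [oscNorm2sq, tsum_eq_sum (s := Λ) (fun x hx => by rw [hosc0 c x hx]; ring)]
    calc ∑ x ∈ Λ, osc (fun ω => c * F ω) x ^ 2 ≤ ∑ _x ∈ Λ, c^2 := by
          refine Finset.sum_le_sum fun x _ => ?_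
          have := sq_abs c ▸ pow_le_pow_left₀ (hoscnn c x) (hoscb c x) 2
          simpa using this
      _ = c^2 * N := by rw [Finset.sum_const]; push_cast [hNdef]; ring
  -- integrability
  have hFint : Integrable F ν := by
    refine Integrable.mono' (integrable_const (N:ℝ)) hFmeas.aestronglyMeasurable ?_
    filter_upwards with ω
    rw [Real.norm_eq_abs, abs_of_nonneg (hF0 ω)]
    exact hFN ω
  set m : ℝ := ∫ ω, F ω ∂ν with hmdef
  have hm0 : 0 ≤ m := integral_nonneg hF0
  have hmN : m ≤ N := by
    calc m ≤ ∫ _ω, (N:ℝ) ∂ν := integral_mono hFint (integrable_const _) hFN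
      _ = N := by simp
  have hexpint : ∀ c : ℝ, Integrable (fun ω => Real.exp (c * F ω - c * m)) ν := by
    intro c
    refine Integrable.mono' (integrable_const (Real.exp (|c| * N + |c| * |m|)))
      ((((hFmeas.const_mul c).sub measurable_const).exp).aestronglyMeasurable) ?_
    filter_upwards with ω
    rw [Real.norm_eq_abs, abs_of_pos (Real.exp_pos _)]
    apply Real.exp_le_exp.mpr
    have h1 : c * F ω ≤ |c| * N := by
      calc c * F ω ≤ |c * F ω| := le_abs_self _
        _ = |c| * |F ω| := abs_mul c (F ω)
        _ ≤ |c| * N := by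
            apply mul_le_mul_of_nonneg_left _ (abs_nonneg c)
            rw [abs_of_nonneg (hF0 ω)]; exact hFN ω
    have h2 : -(c * m) ≤ |c| * |m| := by
      calc -(c * m) ≤ |c * m| := neg_le_abs _
        _ = |c| * |m| := abs_mul c m
    linarith
  -- key GCB consequence
  have key : ∀ c : ℝ, ∫ ω, Real.exp (c * F ω - c * m) ∂ν ≤ Real.exp (D * c^2 * N) := by
    intro c
    have h1 := hGCB (fun ω => c * F ω) (hMem c)
    have h2 : ∫ ω', c * F ω' ∂ν = c * m := by
      rw [hmdef, ← integral_const_mul]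
    rw [h2] at h1
    refine h1.trans (Real.exp_le_exp.mpr ?_)
    have := hoscsum c
    calc D * oscNorm2sq (fun ω => c * F ω) ≤ D * (c^2 * N) :=
          mul_le_mul_of_nonneg_left this hD.le
      _ = D * c^2 * N := by ring
  -- bound on the mean via the lower deviation
  have hlog2 : 0 < Real.log 2 := Real.log_pos (by norm_num)
  set lam0 : ℝ := Real.sqrt (Real.log 2 / (D * N)) with hlam0def
  have hlam0 : 0 < lam0 := Real.sqrt_pos.mpr (by positivity)
  have hlam0sq : lam0 ^ 2 = Real.log 2 / (D * N) := Real.sq_sqrt (by positivity)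
  have hA : MeasurableSet {ω | restrictTo Λ ω ∈ B} :=
    hrmeas (Set.to_countable B).measurableSet
  have hlow : (1/2 : ℝ) * Real.exp (lam0 * m) ≤ Real.exp (D * lam0^2 * N) := by
    have h1 : ∫ ω in {ω | restrictTo Λ ω ∈ B}, Real.exp ((-lam0) * F ω - (-lam0) * m) ∂ν ≤
        ∫ ω, Real.exp ((-lam0) * F ω - (-lam0) * m) ∂ν :=
      setIntegral_le_integral (hexpint (-lam0))
        (Filter.Eventually.of_forall fun ω => (Real.exp_pos _).le)
    have h2 : ∫ ω in {ω | restrictTo Λ ω ∈ B}, Real.exp ((-lam0) * F ω - (-lam0) * m) ∂ν =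
        (1/2 : ℝ) * Real.exp (lam0 * m) := by
      rw [setIntegral_congr_fun hA (g := fun _ => Real.exp (lam0 * m)) ?_]
      · rw [setIntegral_const, smul_eq_mul]
        congr 1
        rw [measureReal_def, hB]
        simp [ENNReal.toReal_div]
      · intro ω hω
        have hzero : hamDistToSet (restrictTo Λ ω) B = 0 := hamDistToSet_eq_zero hω
        simp only [hFdef, hzero, Nat.cast_zero, mul_zero, zero_sub, neg_mul, neg_neg, sub_zero]
    calc (1/2 : ℝ) * Real.exp (lam0 * m) ≤ ∫ ω, Real.exp ((-lam0) * F ω - (-lam0) * m) ∂ν := by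
          rw [← h2]; exact h1
      _ ≤ Real.exp (D * (-lam0)^2 * N) := key (-lam0)
      _ = Real.exp (D * lam0^2 * N) := by rw [neg_sq]
  have hDlamN : D * lam0^2 * N = Real.log 2 := by
    rw [hlam0sq]; field_simp
  have hmean : m ≤ 2 * Real.sqrt (D * Real.log 2) * Real.sqrt N := by
    have h1 : Real.exp (lam0 * m) ≤ Real.exp (Real.log 2 + D * lam0^2 * N) := by
      rw [Real.exp_add, Real.exp_log two_pos]
      linarith
    have h2 : lam0 * m ≤ Real.log 2 + D * lam0^2 * N := Real.exp_le_exp.mp h1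
    rw [hDlamN] at h2
    have h3 : lam0 * (2 * Real.sqrt (D * Real.log 2) * Real.sqrt N) = 2 * Real.log 2 := by
      have e1 : Real.sqrt (D * Real.log 2) ^ 2 = D * Real.log 2 := Real.sq_sqrt (by positivity)
      have e2 : Real.sqrt (N:ℝ) ^ 2 = (N:ℝ) := Real.sq_sqrt hNR.le
      have hpos : 0 ≤ lam0 * (2 * Real.sqrt (D * Real.log 2) * Real.sqrt (N:ℝ)) := by positivity
      have hsq : (lam0 * (2 * Real.sqrt (D * Real.log 2) * Real.sqrt (N:ℝ)))^2
          = (2 * Real.log 2)^2 := by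
        rw [mul_pow, mul_pow, mul_pow, hlam0sq, e1, e2]
        field_simp
      calc lam0 * (2 * Real.sqrt (D * Real.log 2) * Real.sqrt (N:ℝ))
          = Real.sqrt ((lam0 * (2 * Real.sqrt (D * Real.log 2) * Real.sqrt (N:ℝ)))^2) :=
            (Real.sqrt_sq hpos).symm
        _ = Real.sqrt ((2 * Real.log 2)^2) := by rw [hsq]
        _ = 2 * Real.log 2 := Real.sqrt_sq (by positivity)
    nlinarith [hlam0]
  -- upper deviation via Chernoff
  set sN : ℝ := Real.sqrt N with hsNdef
  have hsN : 0 < sN := Real.sqrt_pos.mpr hNR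
  have hsNsq : sN ^ 2 = N := Real.sq_sqrt hNR.le
  set s : ℝ := ε * N - 2 * Real.sqrt (D * Real.log 2) * sN with hsdef
  have hs : 0 < s := by
    have h1 : 2 * Real.sqrt (D * Real.log 2) / sN * N < ε * N :=
      mul_lt_mul_of_pos_right hε hNR
    have h2 : 2 * Real.sqrt (D * Real.log 2) / sN * N = 2 * Real.sqrt (D * Real.log 2) * sN := by
      rw [← hsNsq, pow_two]
      field_simp
    simp only [hsdef]
    linarith [h2 ▸ h1]
  set lam1 : ℝ := s / (2 * D * N) with hlam1def
  have hlam1 : 0 < lam1 := by positivity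
  have hcher : (ν {ω | s ≤ F ω - m}).toReal ≤
      Real.exp (-((N:ℝ) / (4 * D)) * (ε - 2 * Real.sqrt (D * Real.log 2) / sN) ^ 2) := by
    have hint : Integrable (fun ω => Real.exp (lam1 * (F ω - m))) ν := by
      have := hexpint lam1
      simpa [mul_sub] using this
    have h1 := ProbabilityTheory.measure_ge_le_exp_mul_mgf (X := fun ω => F ω - m) (μ := ν)
      (t := lam1) s hlam1.le hint
    have h2 : ProbabilityTheory.mgf (fun ω => F ω - m) ν lam1 ≤ Real.exp (D * lam1^2 * N) := by
      have := key lam1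
      calc ProbabilityTheory.mgf (fun ω => F ω - m) ν lam1
          = ∫ ω, Real.exp (lam1 * F ω - lam1 * m) ∂ν := by
            rw [ProbabilityTheory.mgf]
            exact integral_congr_ae (Filter.Eventually.of_forall fun ω => by simp [mul_sub])
        _ ≤ Real.exp (D * lam1^2 * N) := this
    have h3 : Real.exp (-lam1 * s) * ProbabilityTheory.mgf (fun ω => F ω - m) ν lam1 ≤
        Real.exp (-lam1 * s) * Real.exp (D * lam1^2 * N) :=
      mul_le_mul_of_nonneg_left h2 (Real.exp_pos _).le
    have h4 : Real.exp (-lam1 * s) * Real.exp (D * lam1^2 * N) =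
        Real.exp (-((N:ℝ) / (4 * D)) * (ε - 2 * Real.sqrt (D * Real.log 2) / sN) ^ 2) := by
      rw [← Real.exp_add]
      congr 1
      have hseq : s = sN * (ε * sN - 2 * Real.sqrt (D * Real.log 2)) := by
        rw [hsdef, ← hsNsq]
        ring
      have hεeq : ε - 2 * Real.sqrt (D * Real.log 2) / sN =
          (ε * sN - 2 * Real.sqrt (D * Real.log 2)) / sN := by
        field_simp
      rw [hlam1def, hseq, hεeq]
      have hNsq : (N:ℝ) = sN ^ 2 := hsNsq.symm
      rw [hNsq]
      field_simp
      ring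
    calc (ν {ω | s ≤ F ω - m}).toReal ≤
        Real.exp (-lam1 * s) * ProbabilityTheory.mgf (fun ω => F ω - m) ν lam1 := h1
      _ ≤ _ := h3.trans_eq h4
  -- assembly
  set e : ℝ := Real.exp (-((N:ℝ) / (4 * D)) * (ε - 2 * Real.sqrt (D * Real.log 2) / sN) ^ 2)
    with hedef
  have hEmeas : MeasurableSet {ω | F ω ≤ ε * N} := measurableSet_le hFmeas measurable_const
  have hsubset : {ω | F ω ≤ ε * (N:ℝ)}ᶜ ⊆ {ω | s ≤ F ω - m} := by
    intro ω hω
    simp only [Set.mem_compl_iff, Set.mem_setOf_eq, not_le] at hω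
    simp only [Set.mem_setOf_eq, hsdef]
    have := hmean
    linarith
  have hcompl : ν ({ω | F ω ≤ ε * (N:ℝ)}ᶜ) ≤ ENNReal.ofReal e := by
    refine le_trans (measure_mono hsubset) ?_
    rw [ENNReal.le_ofReal_iff_toReal_le (measure_ne_top ν _) (Real.exp_pos _).le]
    exact hcher
  have hfinal : 1 - ENNReal.ofReal e ≤ ν {ω | F ω ≤ ε * (N:ℝ)} := by
    have h1 : ν {ω | F ω ≤ ε * (N:ℝ)} + ν ({ω | F ω ≤ ε * (N:ℝ)}ᶜ) = 1 :=
      prob_add_prob_compl hEmeas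
    have h2 : 1 - ENNReal.ofReal e ≤ 1 - ν ({ω | F ω ≤ ε * (N:ℝ)}ᶜ) :=
      tsub_le_tsub_left hcompl 1
    refine h2.trans ?_
    rw [tsub_le_iff_right]
    rw [← h1]
  exact hfinal



end Paper
end
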